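/- If f: C → D is a morphism of Hopf heaps, each admitting Grunspan maps ϑ_C and ϑ_D, then f ∘ ϑ_C = ϑ_D ∘ f. -/

import Mathlib

open Coalgebra TensorProduct

universe u v w

/-- A Hopf heap: a coalgebra `C` together with a coalgebra map
`χ : C ⊗ C^co ⊗ C → C` (given here as a trilinear map) satisfying the heap axioms. -/
structure HopfHeap (F : Type u) (C : Type v) [Field F] [AddCommGroup C] [Module F C]
    [Coalgebra F C] where
  χ : C →ₗ[F] C →ₗ[F] C →ₗ[F] C
  counit_χ : ∀ a b c : C,
    counit (R := F) (χ a b c) = counit (R := F) a * counit (R := F) b * counit (R := F) c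
  comul_χ : ∀ (a b c : C) (ιa ιb ιc : Type v) (ra : Coalgebra.Repr.{u, v, v} F a ιa)
      (rb : Coalgebra.Repr.{u, v, v} F b ιb) (rc : Coalgebra.Repr.{u, v, v} F c ιc),
    comul (R := F) (χ a b c) =
      ∑ i ∈ ra.index, ∑ j ∈ rb.index, ∑ k ∈ rc.index,
        χ (ra.left i) (rb.right j) (rc.left k) ⊗ₜ[F] χ (ra.right i) (rb.left j) (rc.right k)
  assoc : ∀ a b c d e : C, χ (χ a b c) d e = χ a b (χ c d e)
  heap_left : ∀ (c a : C) (ι : Type v) (rc : Coalgebra.Repr.{u, v, v} F c ι),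
    ∑ i ∈ rc.index, χ (rc.left i) (rc.right i) a = counit (R := F) c • a
  heap_right : ∀ (c a : C) (ι : Type v) (rc : Coalgebra.Repr.{u, v, v} F c ι),
    ∑ i ∈ rc.index, χ a (rc.left i) (rc.right i) = counit (R := F) c • a

variable {F : Type u} {C : Type v} [Field F] [AddCommGroup C] [Module F C] [Coalgebra F C]

/-- `θ` is a Grunspan map for the Hopf heap `hh`: a coalgebra endomorphism satisfying
`[[a,b,θ c],d,e] = [a,[d,c,b],e]`. -/
def HopfHeap.IsGrunspan (hh : HopfHeap F C) (θ : C →ₗ[F] C) : Prop :=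
  (∀ c : C, counit (R := F) (θ c) = counit (R := F) c) ∧
  (∀ (c : C) (ι : Type v) (rc : Coalgebra.Repr.{u, v, v} F c ι),
    comul (R := F) (θ c) = ∑ i ∈ rc.index, θ (rc.left i) ⊗ₜ[F] θ (rc.right i)) ∧
  (∀ a b c d e : C, hh.χ (hh.χ a b (θ c)) d e = hh.χ a (hh.χ d c b) e)

/-- The right `(a,b)`-translation `τ_a^b : c ↦ [c,a,b]`. -/
def HopfHeap.tau (hh : HopfHeap F C) (a b : C) : C →ₗ[F] C where
  toFun c := hh.χ c a b
  map_add' x y := by simp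
  map_smul' r x := by simp

/-- A morphism of Hopf heaps: a coalgebra map commuting with the ternary operations. -/
structure HopfHeapHom {D : Type w} [AddCommGroup D] [Module F D] [Coalgebra F D]
    (hhC : HopfHeap F C) (hhD : HopfHeap F D) where
  f : C →ₗ[F] D
  counit_f : ∀ c : C, counit (R := F) (f c) = counit (R := F) c
  comul_f : ∀ (c : C) (ι : Type v) (rc : Coalgebra.Repr.{u, v, v} F c ι),
    comul (R := F) (f c) = ∑ i ∈ rc.index, f (rc.left i) ⊗ₜ[F] f (rc.right i)
  map_χ : ∀ a b c : C, f (hhC.χ a b c) = hhD.χ (f a) (f b) (f c)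


universe u' u1 u2 u3 u4

section Helpers

variable {R : Type u} {A : Type v} [CommSemiring R] [AddCommMonoid A] [Module R A]

/-- Reindex a finite sum over a `Finset` to a sum over `ULift (Fin n)` in an arbitrary
universe. -/
lemma sum_ulift_reindex {M : Type*} [AddCommMonoid M] {ι : Type*} (s : Finset ι) (g : ι → M) :
    ∑ i : ULift.{u'} (Fin s.card), g (s.equivFin.symm i.down) = ∑ i ∈ s, g i := by
  rw [← Finset.sum_coe_sort s g]
  exact Fintype.sum_equiv (Equiv.ulift.trans s.equivFin.symm) _ _ (fun i => rfl)

/-- Reindex a coalgebra representation so that its index type lives in an arbitrary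
chosen universe. -/
noncomputable def Coalgebra.Repr.fin [CoalgebraStruct R A] {a : A} {ι : Type*} (r : Coalgebra.Repr R a ι) :
    Coalgebra.Repr.{u, v, u'} R a (ULift.{u'} (Fin r.index.card)) where
  index := (Finset.univ : Finset (ULift.{u'} (Fin r.index.card)))
  left i := r.left (r.index.equivFin.symm i.down)
  right i := r.right (r.index.equivFin.symm i.down)
  eq := by
    rw [← r.eq]
    exact sum_ulift_reindex (M := A ⊗[R] A) r.index fun x => r.left x ⊗ₜ[R] r.right x

variable [Coalgebra R A]

lemma repr_sum_counit_smul_right {a : A} {ι : Type*} (r : Coalgebra.Repr R a ι) :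
    ∑ i ∈ r.index, counit (R := R) (r.left i) • r.right i = a := by
  have h := congrArg (TensorProduct.lid R A) (Coalgebra.sum_counit_tmul_eq r)
  simp only [map_sum, LinearEquiv.coe_coe, TensorProduct.lid_tmul, one_smul] at h
  exact h

lemma repr_sum_counit_smul_left {a : A} {ι : Type*} (r : Coalgebra.Repr R a ι) :
    ∑ i ∈ r.index, counit (R := R) (r.right i) • r.left i = a := by
  have h := congrArg (TensorProduct.rid R A) (Coalgebra.sum_tmul_counit_eq r)
  simp only [map_sum, LinearEquiv.coe_coe, TensorProduct.rid_tmul, one_smul] at h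
  exact h

end Helpers

/-- `heap_left` for a representation with index type in an arbitrary universe. -/
lemma HopfHeap.heap_left' (hh : HopfHeap F C) (c a : C) {ι : Type u'} (rc : Coalgebra.Repr.{u, v, u'} F c ι) :
    ∑ i ∈ rc.index, hh.χ (rc.left i) (rc.right i) a = counit (R := F) c • a := by
  rw [← sum_ulift_reindex rc.index (fun x => hh.χ (rc.left x) (rc.right x) a)]
  exact hh.heap_left c a _ rc.fin

/-- `heap_right` for a representation with index type in an arbitrary universe. -/
lemma HopfHeap.heap_right' (hh : HopfHeap F C) (c a : C) {ι : Type u'} (rc : Coalgebra.Repr.{u, v, u'} F c ι) :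
    ∑ i ∈ rc.index, hh.χ a (rc.left i) (rc.right i) = counit (R := F) c • a := by
  rw [← sum_ulift_reindex rc.index (fun x => hh.χ a (rc.left x) (rc.right x))]
  exact hh.heap_right c a _ rc.fin

/-- Any Grunspan map is given by the explicit formula
`θ c = ∑ [c₁, [c₄, c₃, c₂], c₅]`, for arbitrary representations of the iterated
comultiplications. -/
theorem HopfHeap.grunspan_eq (hh : HopfHeap F C) {θ : C →ₗ[F] C} (h : hh.IsGrunspan θ) (c : C)
    {ι1 : Type u1} {ι2 : Type u2} {ι3 : Type u3} {ι4 : Type u4}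
    (rc : Coalgebra.Repr.{u, v, u1} F c ι1)
    (r1 : ∀ i : ι1, Coalgebra.Repr.{u, v, u2} F (rc.left i) ι2)
    (rs : ∀ i : ι1, Coalgebra.Repr.{u, v, u3} F (rc.right i) ι3)
    (rr : ∀ (i : ι1) (k : ι3), Coalgebra.Repr.{u, v, u4} F ((rs i).right k) ι4) :
    θ c = ∑ i ∈ rc.index, ∑ j ∈ (r1 i).index, ∑ k ∈ (rs i).index, ∑ m ∈ (rr i k).index,
      hh.χ ((r1 i).left j)
        (hh.χ ((rr i k).left m) ((rs i).left k) ((r1 i).right j)) ((rr i k).right m) := by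
  have key : ∀ (A B s : C) (rs' : Coalgebra.Repr.{u, v, u3} F s ι3)
      (rr' : ∀ k : ι3, Coalgebra.Repr.{u, v, u4} F (rs'.right k) ι4),
      hh.χ A B (θ s) = ∑ k ∈ rs'.index, ∑ m ∈ (rr' k).index,
        hh.χ A (hh.χ ((rr' k).left m) (rs'.left k) B) ((rr' k).right m) := by
    intro A B s rs' rr'
    calc hh.χ A B (θ s)
        = hh.χ A B (θ (∑ k ∈ rs'.index, counit (R := F) (rs'.right k) • rs'.left k)) := by
          rw [repr_sum_counit_smul_left rs']
      _ = ∑ k ∈ rs'.index, counit (R := F) (rs'.right k) • hh.χ A B (θ (rs'.left k)) := by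
          rw [map_sum, map_sum]
          exact Finset.sum_congr rfl fun k _ => by rw [map_smul, map_smul]
      _ = ∑ k ∈ rs'.index, ∑ m ∈ (rr' k).index,
            hh.χ (hh.χ A B (θ (rs'.left k))) ((rr' k).left m) ((rr' k).right m) :=
          Finset.sum_congr rfl fun k _ => (hh.heap_right' _ _ (rr' k)).symm
      _ = ∑ k ∈ rs'.index, ∑ m ∈ (rr' k).index,
            hh.χ A (hh.χ ((rr' k).left m) (rs'.left k) B) ((rr' k).right m) :=
          Finset.sum_congr rfl fun k _ => Finset.sum_congr rfl fun m _ => h.2.2 _ _ _ _ _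
  calc θ c
      = θ (∑ i ∈ rc.index, counit (R := F) (rc.left i) • rc.right i) := by
        rw [repr_sum_counit_smul_right rc]
    _ = ∑ i ∈ rc.index, counit (R := F) (rc.left i) • θ (rc.right i) := by
        rw [map_sum]
        exact Finset.sum_congr rfl fun i _ => by rw [map_smul]
    _ = ∑ i ∈ rc.index, ∑ j ∈ (r1 i).index,
          hh.χ ((r1 i).left j) ((r1 i).right j) (θ (rc.right i)) :=
        Finset.sum_congr rfl fun i _ => (hh.heap_left' _ _ (r1 i)).symm
    _ = _ :=
        Finset.sum_congr rfl fun i _ => Finset.sum_congr rfl fun j _ =>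
          key _ _ _ (rs i) (rr i)

/-- A morphism of Hopf heaps intertwines the Grunspan maps: `f ∘ ϑ_C = ϑ_D ∘ f`. -/
theorem hopfHeapHom_grunspan {D : Type w} [AddCommGroup D] [Module F D] [Coalgebra F D]
    (hhC : HopfHeap F C) (hhD : HopfHeap F D) (f : HopfHeapHom hhC hhD)
    (θC : C →ₗ[F] C) (θD : D →ₗ[F] D)
    (hC : hhC.IsGrunspan θC) (hD : hhD.IsGrunspan θD) :
    f.f ∘ₗ θC = θD ∘ₗ f.f := by
  apply LinearMap.ext
  intro c
  let rc0 : Coalgebra.Repr F c (C × C) := ℛ F c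
  let r10 : ∀ i : C × C, Coalgebra.Repr F (rc0.left i) (C × C) := fun i => ℛ F _
  let rs0 : ∀ i : C × C, Coalgebra.Repr F (rc0.right i) (C × C) := fun i => ℛ F _
  let rr0 : ∀ (i : C × C) (k : C × C), Coalgebra.Repr F ((rs0 i).right k) (C × C) :=
    fun i k => ℛ F _
  let rcW : Coalgebra.Repr F (f.f c) (C × C) :=
    ⟨rc0.index, fun i => f.f (rc0.left i), fun i => f.f (rc0.right i),
      (f.comul_f c _ rc0).symm⟩
  let r1W : ∀ i : C × C, Coalgebra.Repr F (rcW.left i) (C × C) := fun i =>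
    ⟨(r10 i).index, fun j => f.f ((r10 i).left j), fun j => f.f ((r10 i).right j),
      (f.comul_f _ _ (r10 i)).symm⟩
  let rsW : ∀ i : C × C, Coalgebra.Repr F (rcW.right i) (C × C) := fun i =>
    ⟨(rs0 i).index, fun k => f.f ((rs0 i).left k), fun k => f.f ((rs0 i).right k),
      (f.comul_f _ _ (rs0 i)).symm⟩
  let rrW : ∀ (i : C × C) (k : C × C), Coalgebra.Repr F ((rsW i).right k) (C × C) := fun i k =>
    ⟨(rr0 i k).index, fun m => f.f ((rr0 i k).left m), fun m => f.f ((rr0 i k).right m),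
      (f.comul_f _ _ (rr0 i k)).symm⟩
  simp only [LinearMap.comp_apply]
  rw [hhC.grunspan_eq hC c rc0 r10 rs0 rr0, hhD.grunspan_eq hD (f.f c) rcW r1W rsW rrW]
  simp only [map_sum, f.map_χ]
  rfl
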